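/- Fix j ∈ {1,…,n} and an integer m ≥ 1, and regard the throughput λ = Z(m−1)/Z(m) as a function of the single variable p_j > 0 with all other parameters fixed. Then λ is differentiable in p_j and p_j · (d/dp_j) λ = λ · (E_{π_{m−1}}[S_j] − E_{π_m}[S_j]), where S_j(x) = x^d_j + x^c_j + x^u_j. -/

import Mathlib

open scoped BigOperators

/-- A state of the closed queueing network: numbers of tasks at each client's
downlink (`d`), computation (`c`), and uplink (`u`) servers. -/
structure St (n : ℕ) where
  d : Fin n → ℕ
  c : Fin n → ℕ
  u : Fin n → ℕ

namespace St

variable {n : ℕ}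

/-- Total number of tasks in a state. -/
def total (x : St n) : ℕ := ∑ i, (x.d i + x.c i + x.u i)

/-- Product-form weight of a state. -/
noncomputable def w (p μc μd μu : Fin n → ℝ) (x : St n) : ℝ :=
  ∏ i,
    (p i / μc i) ^ x.c i *
      ((p i / μd i) ^ x.d i / (Nat.factorial (x.d i) : ℝ)) *
      ((p i / μu i) ^ x.u i / (Nat.factorial (x.u i) : ℝ))

/-- Normalizing constant `Z(k)` (it vanishes for `k < 0`). -/
noncomputable def Z (p μc μd μu : Fin n → ℝ) (k : ℤ) : ℝ :=
  ∑' x : St n, if (total x : ℤ) = k then w p μc μd μu x else 0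

/-- Product-form distribution `π_k`. -/
noncomputable def pd (p μc μd μu : Fin n → ℝ) (k : ℤ) (x : St n) : ℝ :=
  w p μc μd μu x / Z p μc μd μu k

/-- Expectation of `f` under the product-form distribution `π_k`. -/
noncomputable def Epi (p μc μd μu : Fin n → ℝ) (k : ℤ) (f : St n → ℝ) : ℝ :=
  ∑' x : St n, if (total x : ℤ) = k then f x * pd p μc μd μu k x else 0

end St

open St

namespace StAux
variable {n : ℕ}

lemma level_finite (n N : ℕ) : {x : St n | x.total = N}.Finite := by
  apply Set.Finite.subset (Set.finite_range
    (fun g : (Fin n → Fin (N+1)) × (Fin n → Fin (N+1)) × (Fin n → Fin (N+1)) =>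
      (⟨fun i => (g.1 i : ℕ), fun i => (g.2.1 i : ℕ), fun i => (g.2.2 i : ℕ)⟩ : St n)))
  intro x hx
  simp only [Set.mem_setOf_eq, total] at hx
  have hb : ∀ i : Fin n, x.d i ≤ N ∧ x.c i ≤ N ∧ x.u i ≤ N := by
    intro i
    have h := Finset.single_le_sum (f := fun i => x.d i + x.c i + x.u i)
      (fun i _ => Nat.zero_le _) (Finset.mem_univ i)
    simp only [hx] at h
    omega
  refine ⟨(fun i => ⟨x.d i, Nat.lt_succ_of_le (hb i).1⟩,
         fun i => ⟨x.c i, Nat.lt_succ_of_le (hb i).2.1⟩,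
         fun i => ⟨x.u i, Nat.lt_succ_of_le (hb i).2.2⟩), ?_⟩
  cases x; rfl

lemma Z_eq (p μc μd μu : Fin n → ℝ) (N : ℕ) :
    Z p μc μd μu (N : ℤ) = ∑ x ∈ (level_finite n N).toFinset, w p μc μd μu x := by
  rw [Z, tsum_eq_sum (s := (level_finite n N).toFinset)]
  · refine Finset.sum_congr rfl fun x hx => ?_
    rw [Set.Finite.mem_toFinset] at hx
    simp only [Set.mem_setOf_eq] at hx
    rw [if_pos (by exact_mod_cast hx)]
  · intro x hx
    rw [Set.Finite.mem_toFinset] at hx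
    simp only [Set.mem_setOf_eq] at hx
    rw [if_neg (by exact_mod_cast hx)]

lemma Epi_eq (p μc μd μu : Fin n → ℝ) (N : ℕ) (f : St n → ℝ) :
    Epi p μc μd μu (N : ℤ) f
      = (∑ x ∈ (level_finite n N).toFinset, f x * w p μc μd μu x) / Z p μc μd μu (N : ℤ) := by
  rw [Epi, tsum_eq_sum (s := (level_finite n N).toFinset), Finset.sum_div]
  · refine Finset.sum_congr rfl fun x hx => ?_
    rw [Set.Finite.mem_toFinset] at hx
    simp only [Set.mem_setOf_eq] at hx
    rw [if_pos (by exact_mod_cast hx), pd, mul_div_assoc]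
  · intro x hx
    rw [Set.Finite.mem_toFinset] at hx
    simp only [Set.mem_setOf_eq] at hx
    rw [if_neg (by exact_mod_cast hx)]

lemma w_pos {p μc μd μu : Fin n → ℝ} (hp : ∀ i, 0 < p i)
    (hμc : ∀ i, 0 < μc i) (hμd : ∀ i, 0 < μd i) (hμu : ∀ i, 0 < μu i) (x : St n) :
    0 < w p μc μd μu x := by
  apply Finset.prod_pos
  intro i _
  have h1 := hp i; have h2 := hμc i; have h3 := hμd i; have h4 := hμu i
  have h5 : (0:ℝ) < (Nat.factorial (x.d i) : ℝ) := by exact_mod_cast Nat.factorial_pos _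
  have h6 : (0:ℝ) < (Nat.factorial (x.u i) : ℝ) := by exact_mod_cast Nat.factorial_pos _
  positivity

lemma w_update {p μc μd μu : Fin n → ℝ} (j : Fin n)
    (hpj : p j ≠ 0) (hμcj : μc j ≠ 0) (hμdj : μd j ≠ 0) (hμuj : μu j ≠ 0)
    (t : ℝ) (x : St n) :
    w (Function.update p j t) μc μd μu x
      = (w p μc μd μu x / p j ^ (x.d j + x.c j + x.u j)) * t ^ (x.d j + x.c j + x.u j) := by
  unfold w
  rw [← Finset.prod_erase_mul _ _ (Finset.mem_univ j),
      ← Finset.prod_erase_mul _ _ (Finset.mem_univ j)]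
  rw [Finset.prod_congr rfl (fun i hi => by
    rw [Function.update_of_ne (Finset.ne_of_mem_erase hi)])]
  rw [Function.update_self]
  have key : (t / μc j) ^ x.c j * ((t / μd j) ^ x.d j / (Nat.factorial (x.d j) : ℝ)) *
        ((t / μu j) ^ x.u j / (Nat.factorial (x.u j) : ℝ))
      = ((p j / μc j) ^ x.c j * ((p j / μd j) ^ x.d j / (Nat.factorial (x.d j) : ℝ)) *
        ((p j / μu j) ^ x.u j / (Nat.factorial (x.u j) : ℝ))) / p j ^ (x.d j + x.c j + x.u j)
          * t ^ (x.d j + x.c j + x.u j) := by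
    have hfd : (Nat.factorial (x.d j) : ℝ) ≠ 0 := by positivity
    have hfu : (Nat.factorial (x.u j) : ℝ) ≠ 0 := by positivity
    rw [div_pow, div_pow, div_pow, div_pow, div_pow, div_pow, pow_add, pow_add, pow_add, pow_add]
    field_simp
  rw [key]
  ring

end StAux

open StAux

/-- The throughput `λ = Z(m-1)/Z(m)`, seen as a function of `p_j`, is differentiable and
satisfies `p_j · (d/dp_j) λ = λ · (E_{π_{m-1}}[S_j] - E_{π_m}[S_j])`. -/
theorem stmt10 (n m : ℕ) (hn : 1 ≤ n) (hm : 1 ≤ m)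
    (p μc μd μu : Fin n → ℝ)
    (hp : ∀ i, 0 < p i)
    (hμc : ∀ i, 0 < μc i) (hμd : ∀ i, 0 < μd i) (hμu : ∀ i, 0 < μu i)
    (j : Fin n) :
    DifferentiableAt ℝ
      (fun t => Z (Function.update p j t) μc μd μu ((m : ℤ) - 1) /
        Z (Function.update p j t) μc μd μu (m : ℤ)) (p j) ∧
    p j * deriv (fun t => Z (Function.update p j t) μc μd μu ((m : ℤ) - 1) /
        Z (Function.update p j t) μc μd μu (m : ℤ)) (p j) =
      (Z p μc μd μu ((m : ℤ) - 1) / Z p μc μd μu (m : ℤ)) *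
        (Epi p μc μd μu ((m : ℤ) - 1) (fun x => ((x.d j + x.c j + x.u j : ℕ) : ℝ)) -
          Epi p μc μd μu (m : ℤ) (fun x => ((x.d j + x.c j + x.u j : ℕ) : ℝ))) := by
  have hpj : p j ≠ 0 := (hp j).ne'
  have hm1 : ((m : ℤ) - 1) = ((m - 1 : ℕ) : ℤ) := by omega
  set S : St n → ℕ := fun x => x.d j + x.c j + x.u j with hS
  set A : St n → ℝ := fun x => w p μc μd μu x / p j ^ S x with hA
  set F : ℕ → ℝ → ℝ := fun N t => ∑ x ∈ (level_finite n N).toFinset, A x * t ^ S x with hF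
  -- Z of updated p equals F
  have hZF : ∀ (N : ℕ) (t : ℝ), Z (Function.update p j t) μc μd μu (N : ℤ) = F N t := by
    intro N t
    rw [Z_eq]
    exact Finset.sum_congr rfl fun x _ =>
      w_update j hpj (hμc j).ne' (hμd j).ne' (hμu j).ne' t x
  -- positivity of Z at natural levels
  have hZpos : ∀ N : ℕ, 0 < Z p μc μd μu (N : ℤ) := by
    intro N
    rw [Z_eq]
    apply Finset.sum_pos (fun x _ => w_pos hp hμc hμd hμu x)
    refine ⟨⟨fun _ => 0, fun i => if i = j then N else 0, fun _ => 0⟩, ?_⟩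
    rw [Set.Finite.mem_toFinset]
    simp [total, Finset.sum_ite_eq']
  -- F N (p j) = Z p N
  have hFp : ∀ N : ℕ, F N (p j) = Z p μc μd μu (N : ℤ) := by
    intro N
    rw [← hZF N (p j), Function.update_eq_self]
  have hFdiff : ∀ N : ℕ, Differentiable ℝ (F N) := by
    intro N
    exact Differentiable.fun_sum fun x _ => (differentiable_pow (𝕜 := ℝ) (S x)).const_mul (A x)
  have hFderiv : ∀ N : ℕ, deriv (F N) (p j)
      = ∑ x ∈ (level_finite n N).toFinset, A x * ((S x : ℝ) * p j ^ (S x - 1)) := by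
    intro N
    rw [hF]
    rw [deriv_fun_sum (fun x _ => ((differentiable_pow (𝕜 := ℝ) (S x)).const_mul (A x)).differentiableAt)]
    refine Finset.sum_congr rfl fun x _ => ?_
    rw [deriv_const_mul _ (differentiable_pow (𝕜 := ℝ) (S x)).differentiableAt, deriv_pow_field]
  have hkey : ∀ N : ℕ, p j * deriv (F N) (p j)
      = ∑ x ∈ (level_finite n N).toFinset, (S x : ℝ) * w p μc μd μu x := by
    intro N
    rw [hFderiv, Finset.mul_sum]
    refine Finset.sum_congr rfl fun x _ => ?_
    rcases Nat.eq_zero_or_pos (S x) with h | h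
    · simp [h]
    · have hpow : p j * p j ^ (S x - 1) = p j ^ S x := by
        conv_rhs => rw [show S x = (S x - 1) + 1 by omega]
        rw [pow_succ']
      have hAw : A x * p j ^ S x = w p μc μd μu x :=
        div_mul_cancel₀ _ (pow_ne_zero _ hpj)
      calc p j * (A x * ((S x : ℝ) * p j ^ (S x - 1)))
          = (S x : ℝ) * (A x * (p j * p j ^ (S x - 1))) := by ring
        _ = (S x : ℝ) * (A x * p j ^ S x) := by rw [hpow]
        _ = (S x : ℝ) * w p μc μd μu x := by rw [hAw]
  set M := m - 1 with hM
  have hfun : (fun t => Z (Function.update p j t) μc μd μu ((m : ℤ) - 1) /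
        Z (Function.update p j t) μc μd μu (m : ℤ))
      = fun t => F M t / F m t := by
    funext t
    rw [hm1, hZF, hZF]
  have hZm : F m (p j) ≠ 0 := by rw [hFp]; exact (hZpos m).ne'
  have hZM : F M (p j) ≠ 0 := by rw [hFp]; exact (hZpos M).ne'
  constructor
  · rw [hfun]
    exact ((hFdiff M).differentiableAt).div ((hFdiff m).differentiableAt) hZm
  · rw [hfun, deriv_fun_div ((hFdiff M).differentiableAt) ((hFdiff m).differentiableAt) hZm]
    rw [hm1, Epi_eq, Epi_eq]
    have hEM : (∑ x ∈ (level_finite n M).toFinset,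
        ((x.d j + x.c j + x.u j : ℕ) : ℝ) * w p μc μd μu x)
        = ∑ x ∈ (level_finite n M).toFinset, (S x : ℝ) * w p μc μd μu x := rfl
    have hEm : (∑ x ∈ (level_finite n m).toFinset,
        ((x.d j + x.c j + x.u j : ℕ) : ℝ) * w p μc μd μu x)
        = ∑ x ∈ (level_finite n m).toFinset, (S x : ℝ) * w p μc μd μu x := rfl
    rw [hEM, hEm, ← hkey M, ← hkey m, ← hFp M, ← hFp m]
    set DM := deriv (F M) (p j)
    set Dm := deriv (F m) (p j)
    set a := F M (p j)
    set b := F m (p j)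
    field_simp
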